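/- Let (Γ,⊑) and (Γ',⊑') be extended modular complexes, and form their product: the digraph on pairs (p,p') of vertices with a directed edge (p,p')→(q,q') iff either p = q and p'→q' in Γ', or p' = q' and p→q in Γ; the induced partial order on the product is the componentwise order, the relation is (p,p') ⊑_× (q,q') iff p ⊑ q and p' ⊑' q', and product intervals are [(a,a'),(b,b')] = [a,b] × [a',b']. Then (x,x') and (y,y') are ◇-neighbors in the product iff x,y are ◇-neighbors in Γ and x',y' are ◇-neighbors in Γ'. Consequently, the thickening distance of the product satisfies d^◇((x,x'),(y,y')) = max( d^◇_Γ(x,y), d^◇_{Γ'}(x',y') ). -/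

import Mathlib

namespace ZeroExt

variable {V : Type*}

/-- The metric interval `I(x,y)` in a graph. -/
def interval (G : SimpleGraph V) (x y : V) : Set V :=
  {z | G.dist x z + G.dist z y = G.dist x y}

/-- `m` is a median of `x, y, z`. -/
def IsMedian (G : SimpleGraph V) (x y z m : V) : Prop :=
  m ∈ interval G x y ∧ m ∈ interval G y z ∧ m ∈ interval G x z

/-- A graph is modular if every triple of vertices has a median. -/
def Modular (G : SimpleGraph V) : Prop :=
  ∀ x y z : V, ∃ m : V, IsMedian G x y z m

/-- `(a,b,c)` is a shortest subpath. -/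
def ShortestTriple (G : SimpleGraph V) (a b c : V) : Prop :=
  G.dist a b + G.dist b c = G.dist a c

/-- `(a,b,c,d)` is a shortest subpath. -/
def ShortestQuad (G : SimpleGraph V) (a b c d : V) : Prop :=
  G.dist a b + G.dist b c + G.dist c d = G.dist a d

/-- `(x1,x2,x3,x4)` is an isometric rectangle. -/
def IsoRect (G : SimpleGraph V) (x1 x2 x3 x4 : V) : Prop :=
  ShortestTriple G x4 x1 x2 ∧ ShortestTriple G x1 x2 x3 ∧
    ShortestTriple G x2 x3 x4 ∧ ShortestTriple G x3 x4 x1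

/-- A set of vertices is convex if it contains the interval of each pair of its points. -/
def Convex (G : SimpleGraph V) (U : Set V) : Prop :=
  ∀ x ∈ U, ∀ y ∈ U, interval G x y ⊆ U

/-- `g` is a gate of `q` at `U`. -/
def IsGate (G : SimpleGraph V) (U : Set V) (q g : V) : Prop :=
  g ∈ U ∧ ∀ u ∈ U, G.dist q u = G.dist q g + G.dist g u

/-- A 4-cycle in a graph. -/
def IsFourCycle (G : SimpleGraph V) (x1 x2 x3 x4 : V) : Prop :=
  G.Adj x1 x2 ∧ G.Adj x2 x3 ∧ G.Adj x3 x4 ∧ G.Adj x4 x1 ∧ x1 ≠ x3 ∧ x2 ≠ x4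

/-- A modular complex: a finite connected modular graph together with an
acyclic admissible edge orientation. -/
structure ModularComplex (V : Type*) [Fintype V] where
  G : SimpleGraph V
  connected : G.Connected
  modular : Modular G
  ori : V → V → Prop
  ori_adj : ∀ {x y : V}, ori x y → G.Adj x y
  ori_total : ∀ {x y : V}, G.Adj x y → ori x y ∨ ori y x
  acyclic : ∀ {x y : V}, Relation.ReflTransGen ori x y → Relation.ReflTransGen ori y x → x = y
  admissible : ∀ {x1 x2 x3 x4 : V}, IsFourCycle G x1 x2 x3 x4 → ori x1 x2 → ori x4 x3

variable [Fintype V]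

/-- The partial order `⪯` induced by the orientation. -/
def ModularComplex.le (Γ : ModularComplex V) : V → V → Prop :=
  Relation.ReflTransGen Γ.ori

/-- The order interval `[p,q]`. -/
def ModularComplex.Icc (Γ : ModularComplex V) (p q : V) : Set V :=
  {x | Γ.le p x ∧ Γ.le x q}

/-- `m` is the greatest lower bound `p ∧ q`. -/
def ModularComplex.IsMeet (Γ : ModularComplex V) (p q m : V) : Prop :=
  Γ.le m p ∧ Γ.le m q ∧ ∀ x : V, Γ.le x p → Γ.le x q → Γ.le x m

/-- `j` is the least upper bound `p ∨ q`. -/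
def ModularComplex.IsJoin (Γ : ModularComplex V) (p q j : V) : Prop :=
  Γ.le p j ∧ Γ.le q j ∧ ∀ x : V, Γ.le p x → Γ.le q x → Γ.le j x

/-- `(p,q)` is a Boolean pair. -/
def ModularComplex.BooleanPair (Γ : ModularComplex V) (p q : V) : Prop :=
  ∃ (k : ℕ) (φ : Finset (Fin k) → V), Function.Injective φ ∧
    φ ∅ = p ∧ φ Finset.univ = q ∧
    ∀ (S : Finset (Fin k)) (i : Fin k), i ∉ S → Γ.ori (φ S) (φ (insert i S))

/-- An extended modular complex: a modular complex with an admissible relation `⊑`. -/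
structure ExtendedModularComplex (V : Type*) [Fintype V] extends ModularComplex V where
  sq : V → V → Prop
  sq_le : ∀ {p q : V}, sq p q → toModularComplex.le p q
  sq_refl : ∀ p : V, sq p p
  sq_edge : ∀ {p q : V}, ori p q → sq p q
  sq_interval : ∀ {p q a b : V}, sq p q → toModularComplex.le a b →
    a ∈ toModularComplex.Icc p q → b ∈ toModularComplex.Icc p q → sq a b
  sq_join : ∀ {p q1 q2 j : V}, sq p q1 → sq p q2 → toModularComplex.IsJoin q1 q2 j → sq p j
  sq_meet : ∀ {p1 p2 q m : V}, sq p1 q → sq p2 q → toModularComplex.IsMeet p1 p2 m → sq m q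

/-- `L^+_p = {x : p ⊑ x}`. -/
def ExtendedModularComplex.Lpos (Γ : ExtendedModularComplex V) (p : V) : Set V :=
  {x | Γ.sq p x}

/-- `L^-_p = {x : x ⊑ p}`. -/
def ExtendedModularComplex.Lneg (Γ : ExtendedModularComplex V) (p : V) : Set V :=
  {x | Γ.sq x p}

/-- `p, q` are ◇-neighbors. -/
def ExtendedModularComplex.DiamondNb (Γ : ExtendedModularComplex V) (p q : V) : Prop :=
  ∃ a b : V, Γ.sq a b ∧ p ∈ Γ.Icc a b ∧ q ∈ Γ.Icc a b

/-- The thickening `Δ(Γ)`. -/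
def ExtendedModularComplex.thick (Γ : ExtendedModularComplex V) : SimpleGraph V where
  Adj p q := p ≠ q ∧ Γ.DiamondNb p q
  symm := by
    constructor
    rintro p q ⟨hne, a, b, hab, hp, hq⟩
    exact ⟨hne.symm, a, b, hab, hq, hp⟩
  loopless := by constructor; rintro p ⟨hne, -⟩; exact hne rfl


variable {V' : Type*} [Fintype V']

/-- The componentwise order on the product. -/
def prodLe (Γ : ExtendedModularComplex V) (Γ' : ExtendedModularComplex V')
    (x y : V × V') : Prop :=
  Γ.le x.1 y.1 ∧ Γ'.le x.2 y.2

/-- The product relation `⊑_×`. -/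
def prodSq (Γ : ExtendedModularComplex V) (Γ' : ExtendedModularComplex V')
    (x y : V × V') : Prop :=
  Γ.sq x.1 y.1 ∧ Γ'.sq x.2 y.2

/-- ◇-neighbors in the product. -/
def prodDiamondNb (Γ : ExtendedModularComplex V) (Γ' : ExtendedModularComplex V')
    (p q : V × V') : Prop :=
  ∃ a b : V × V', prodSq Γ Γ' a b ∧
    (prodLe Γ Γ' a p ∧ prodLe Γ Γ' p b) ∧ (prodLe Γ Γ' a q ∧ prodLe Γ Γ' q b)

/-- The thickening of the product. -/
def prodThick (Γ : ExtendedModularComplex V) (Γ' : ExtendedModularComplex V') :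
    SimpleGraph (V × V') where
  Adj p q := p ≠ q ∧ prodDiamondNb Γ Γ' p q
  symm := by
    constructor
    rintro p q ⟨hne, a, b, hab, hp, hq⟩
    exact ⟨hne.symm, a, b, hab, hq, hp⟩
  loopless := by constructor; rintro p ⟨hne, -⟩; exact hne rfl

section Aux

variable (Γ : ExtendedModularComplex V) {Γ' : ExtendedModularComplex V'}

lemma diamond_refl (p : V) : Γ.DiamondNb p p :=
  ⟨p, p, Γ.sq_refl p, ⟨Relation.ReflTransGen.refl, Relation.ReflTransGen.refl⟩,
    ⟨Relation.ReflTransGen.refl, Relation.ReflTransGen.refl⟩⟩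

lemma thick_adj_of_adj {x y : V} (h : Γ.G.Adj x y) : Γ.thick.Adj x y := by
  refine ⟨h.ne, ?_⟩
  rcases Γ.ori_total h with ho | ho
  · exact ⟨x, y, Γ.sq_edge ho,
      ⟨Relation.ReflTransGen.refl, Relation.ReflTransGen.single ho⟩,
      ⟨Relation.ReflTransGen.single ho, Relation.ReflTransGen.refl⟩⟩
  · exact ⟨y, x, Γ.sq_edge ho,
      ⟨Relation.ReflTransGen.single ho, Relation.ReflTransGen.refl⟩,
      ⟨Relation.ReflTransGen.refl, Relation.ReflTransGen.single ho⟩⟩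

lemma thick_connected : Γ.thick.Connected := by
  have hle : Γ.G ≤ Γ.thick := fun {x y} h => thick_adj_of_adj Γ h
  have : Nonempty V := Γ.connected.nonempty
  exact ⟨fun u v => ((Γ.connected u v).mono hle)⟩

variable {Γ}

/-- One step in the product thickening from component data. -/
lemma prod_step {x y : V} {x' y' : V'}
    (h : Γ.DiamondNb x y) (h' : Γ'.DiamondNb x' y') (hne : (x, x') ≠ (y, y')) :
    (prodThick Γ Γ').Adj (x, x') (y, y') := by
  obtain ⟨a, b, hab, hx, hy⟩ := h
  obtain ⟨a', b', hab', hx', hy'⟩ := h'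
  exact ⟨hne, (a, a'), (b, b'), ⟨hab, hab'⟩,
    ⟨⟨hx.1, hx'.1⟩, ⟨hx.2, hx'.2⟩⟩, ⟨⟨hy.1, hy'.1⟩, ⟨hy.2, hy'.2⟩⟩⟩

lemma thick_adj_of_prod {p q : V × V'} (h : (prodThick Γ Γ').Adj p q) :
    Γ.DiamondNb p.1 q.1 ∧ Γ'.DiamondNb p.2 q.2 := by
  obtain ⟨-, a, b, hab, hp, hq⟩ := h
  exact ⟨⟨a.1, b.1, hab.1, ⟨hp.1.1, hp.2.1⟩, ⟨hq.1.1, hq.2.1⟩⟩,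
    ⟨a.2, b.2, hab.2, ⟨hp.1.2, hp.2.2⟩, ⟨hq.1.2, hq.2.2⟩⟩⟩

lemma proj_dist_le₁ {p q : V × V'} (W : (prodThick Γ Γ').Walk p q) :
    Γ.thick.dist p.1 q.1 ≤ W.length := by
  induction W with
  | nil => simp [SimpleGraph.dist_self]
  | @cons u v w h W ih =>
    have hd := (thick_adj_of_prod h).1
    by_cases hv : u.1 = v.1
    · rw [SimpleGraph.Walk.length_cons, hv]
      exact le_trans ih (Nat.le_succ _)
    · have hadj : Γ.thick.Adj u.1 v.1 := ⟨hv, hd⟩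
      calc Γ.thick.dist u.1 w.1 ≤ Γ.thick.dist u.1 v.1 + Γ.thick.dist v.1 w.1 :=
            (thick_connected Γ).dist_triangle
        _ ≤ 1 + W.length := by
            have h1 : Γ.thick.dist u.1 v.1 ≤ 1 :=
              SimpleGraph.dist_le (hadj.toWalk)
            exact Nat.add_le_add h1 ih
        _ = (SimpleGraph.Walk.cons h W).length := by
            simp [SimpleGraph.Walk.length_cons, Nat.add_comm]

lemma proj_dist_le₂ {p q : V × V'} (W : (prodThick Γ Γ').Walk p q) :
    Γ'.thick.dist p.2 q.2 ≤ W.length := by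
  induction W with
  | nil => simp [SimpleGraph.dist_self]
  | @cons u v w h W ih =>
    have hd := (thick_adj_of_prod h).2
    by_cases hv : u.2 = v.2
    · rw [SimpleGraph.Walk.length_cons, hv]
      exact le_trans ih (Nat.le_succ _)
    · have hadj : Γ'.thick.Adj u.2 v.2 := ⟨hv, hd⟩
      calc Γ'.thick.dist u.2 w.2 ≤ Γ'.thick.dist u.2 v.2 + Γ'.thick.dist v.2 w.2 :=
            (thick_connected Γ').dist_triangle
        _ ≤ 1 + W.length := Nat.add_le_add (SimpleGraph.dist_le hadj.toWalk) ih
        _ = (SimpleGraph.Walk.cons h W).length := by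
            simp [SimpleGraph.Walk.length_cons, Nat.add_comm]

lemma length_zero_eq {G : SimpleGraph V} {x y : V} (W : G.Walk x y) (h : W.length = 0) :
    x = y := by
  cases W with
  | nil => rfl
  | cons _ _ => simp at h

/-- Pad the shorter walk: a product walk of length `W.length` when `W'.length ≤ W.length`. -/
lemma prod_walk_of_walks₁ :
    ∀ {x y : V} (W : Γ.thick.Walk x y) {x' y' : V'} (W' : Γ'.thick.Walk x' y'),
    W'.length ≤ W.length →
    ∃ P : (prodThick Γ Γ').Walk (x, x') (y, y'), P.length = W.length := by
  intro x y W
  induction W with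
  | nil =>
    intro x' y' W' hlen
    have : x' = y' := length_zero_eq W' (Nat.le_zero.mp hlen)
    subst this
    exact ⟨SimpleGraph.Walk.nil, rfl⟩
  | @cons u v w h W ih =>
    intro x' y' W' hlen
    cases W' with
    | nil =>
      obtain ⟨P, hP⟩ := ih (SimpleGraph.Walk.nil (u := x')) (Nat.zero_le _)
      refine ⟨SimpleGraph.Walk.cons (prod_step h.2 (diamond_refl Γ' x') ?_) P, by simp [hP]⟩
      intro hc
      exact h.1 (congrArg Prod.fst hc)
    | @cons _ v' _ h' W'' =>
      obtain ⟨P, hP⟩ := ih W'' (Nat.le_of_succ_le_succ hlen)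
      refine ⟨SimpleGraph.Walk.cons (prod_step h.2 h'.2 ?_) P, by simp [hP]⟩
      intro hc
      exact h.1 (congrArg Prod.fst hc)

/-- Pad the shorter walk, other side. -/
lemma prod_walk_of_walks₂ :
    ∀ {x' y' : V'} (W' : Γ'.thick.Walk x' y') {x y : V} (W : Γ.thick.Walk x y),
    W.length ≤ W'.length →
    ∃ P : (prodThick Γ Γ').Walk (x, x') (y, y'), P.length = W'.length := by
  intro x' y' W'
  induction W' with
  | nil =>
    intro x y W hlen
    have : x = y := length_zero_eq W (Nat.le_zero.mp hlen)
    subst this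
    exact ⟨SimpleGraph.Walk.nil, rfl⟩
  | @cons u' v' w' h' W' ih =>
    intro x y W hlen
    cases W with
    | nil =>
      obtain ⟨P, hP⟩ := ih (SimpleGraph.Walk.nil (u := x)) (Nat.zero_le _)
      refine ⟨SimpleGraph.Walk.cons (prod_step (diamond_refl Γ x) h'.2 ?_) P, by simp [hP]⟩
      intro hc
      exact h'.1 (congrArg Prod.snd hc)
    | @cons _ v _ h W'' =>
      obtain ⟨P, hP⟩ := ih W'' (Nat.le_of_succ_le_succ hlen)
      refine ⟨SimpleGraph.Walk.cons (prod_step h.2 h'.2 ?_) P, by simp [hP]⟩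
      intro hc
      exact h'.1 (congrArg Prod.snd hc)

end Aux

/-- ◇-neighbors in a product are exactly componentwise ◇-neighbors,
and the thickening distance of the product is the max of the component thickening
distances. -/
theorem prod_diamondNb_and_dist (Γ : ExtendedModularComplex V)
    (Γ' : ExtendedModularComplex V') :
    (∀ (x y : V) (x' y' : V'),
      prodDiamondNb Γ Γ' (x, x') (y, y') ↔ Γ.DiamondNb x y ∧ Γ'.DiamondNb x' y') ∧
    (∀ p q : V × V',
      (prodThick Γ Γ').dist p q =
        max (Γ.thick.dist p.1 q.1) (Γ'.thick.dist p.2 q.2)) := by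
  constructor
  · intro x y x' y'
    constructor
    · rintro ⟨a, b, hab, ⟨hxa, hxb⟩, ⟨hya, hyb⟩⟩
      exact ⟨⟨a.1, b.1, hab.1, ⟨hxa.1, hxb.1⟩, ⟨hya.1, hyb.1⟩⟩,
        ⟨a.2, b.2, hab.2, ⟨hxa.2, hxb.2⟩, ⟨hya.2, hyb.2⟩⟩⟩
    · rintro ⟨⟨a, b, hab, hx, hy⟩, ⟨a', b', hab', hx', hy'⟩⟩
      exact ⟨(a, a'), (b, b'), ⟨hab, hab'⟩,
        ⟨⟨hx.1, hx'.1⟩, ⟨hx.2, hx'.2⟩⟩, ⟨⟨hy.1, hy'.1⟩, ⟨hy.2, hy'.2⟩⟩⟩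
  · intro p q
    obtain ⟨W, hW⟩ := (thick_connected Γ).exists_walk_length_eq_dist p.1 q.1
    obtain ⟨W', hW'⟩ := (thick_connected Γ').exists_walk_length_eq_dist p.2 q.2
    have hub : (prodThick Γ Γ').dist p q ≤
        max (Γ.thick.dist p.1 q.1) (Γ'.thick.dist p.2 q.2) := by
      rcases le_total W'.length W.length with hle | hle
      · obtain ⟨P, hP⟩ := prod_walk_of_walks₁ W W' hle
        calc (prodThick Γ Γ').dist p q ≤ P.length := SimpleGraph.dist_le P
          _ = Γ.thick.dist p.1 q.1 := by rw [hP, hW]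
          _ ≤ _ := le_max_left _ _
      · obtain ⟨P, hP⟩ := prod_walk_of_walks₂ W' W hle
        calc (prodThick Γ Γ').dist p q ≤ P.length := SimpleGraph.dist_le P
          _ = Γ'.thick.dist p.2 q.2 := by rw [hP, hW']
          _ ≤ _ := le_max_right _ _
    have hreach : (prodThick Γ Γ').Reachable p q := by
      rcases le_total W'.length W.length with hle | hle
      · obtain ⟨P, -⟩ := prod_walk_of_walks₁ W W' hle
        exact ⟨P⟩
      · obtain ⟨P, -⟩ := prod_walk_of_walks₂ W' W hle
        exact ⟨P⟩
    obtain ⟨Q, hQ⟩ := hreach.exists_walk_length_eq_dist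
    have h1 : Γ.thick.dist p.1 q.1 ≤ (prodThick Γ Γ').dist p q := hQ ▸ proj_dist_le₁ Q
    have h2 : Γ'.thick.dist p.2 q.2 ≤ (prodThick Γ Γ').dist p q := hQ ▸ proj_dist_le₂ Q
    exact le_antisymm hub (max_le h1 h2)

end ZeroExt
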